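/- Let γ_E have density f_E(z) = (ξ_E²/2)·z^{ξ_E²/2 − 1}/(A_0^{ξ_E²} γ̄_E^{ξ_E²/2}) on (0, γ_E^max] with γ_E^max = γ̄_E A_0², and let γ_H be independent with CDF F_H(x) = min(1, (x/γ̄_H)^{ξ_H²/2} A_0^{−ξ_H²}). Suppose 0 < Ψ ≤ γ_E^max, where Ψ = (γ̄_H A_0² + 1)/2^{R_s} − 1. Then Pr[γ_H < 2^{R_s}(1+γ_E) − 1] = [ (2^{R_s}−1)^{ξ_H²/2} ξ_E² γ̄_H^{−ξ_H²/2} / (2 A_0^{ξ_H²+ξ_E²} γ̄_E^{ξ_E²/2}) ] · ∫_0^Ψ z^{ξ_E²/2−1}(1 + (2^{R_s}/(2^{R_s}−1)) z)^{ξ_H²/2} dz + F_E(γ_E^max) − F_E(Ψ), where F_E is the CDF of γ_E. -/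

import Mathlib

open Real MeasureTheory Filter Topology
open scoped ENNReal

lemma cdf_lt_eq {Ω : Type*} [MeasurableSpace Ω] (μ : Measure Ω) [IsProbabilityMeasure μ]
    (γ : Ω → ℝ) (F : ℝ → ℝ) (hF : Continuous F)
    (hcdf : ∀ x : ℝ, 0 ≤ x → (μ {ω | γ ω ≤ x}).toReal = F x)
    {x : ℝ} (hx : 0 < x) :
    μ {ω | γ ω < x} = ENNReal.ofReal (F x) := by
  obtain ⟨N, hN⟩ := exists_nat_one_div_lt hx
  set u : ℕ → Set Ω := fun n => {ω | γ ω ≤ x - 1 / (n + 1)} with hu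
  have hmono : Monotone u := by
    intro n m hnm ω hω
    have h1 : (1 : ℝ) / (m + 1) ≤ 1 / (n + 1) := by
      apply one_div_le_one_div_of_le (by positivity)
      exact_mod_cast by exact_mod_cast Nat.add_le_add_right hnm 1
    simp only [u, Set.mem_setOf_eq] at *
    linarith
  have hunion : (⋃ n, u n) = {ω | γ ω < x} := by
    ext ω
    simp only [Set.mem_iUnion, u, Set.mem_setOf_eq]
    constructor
    · rintro ⟨n, hn⟩
      have : (0:ℝ) < 1 / (n + 1) := by positivity
      linarith
    · intro h
      obtain ⟨n, hn⟩ := exists_nat_one_div_lt (sub_pos.mpr h)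
      exact ⟨n, by linarith⟩
  have htend : Tendsto (fun n => μ (u n)) atTop (𝓝 (μ {ω | γ ω < x})) := by
    have := tendsto_measure_iUnion_atTop (μ := μ) hmono
    rwa [hunion] at this
  have htr : Tendsto (fun n => (μ (u n)).toReal) atTop (𝓝 ((μ {ω | γ ω < x}).toReal)) :=
    (ENNReal.tendsto_toReal (measure_ne_top μ _)).comp htend
  have hFt : Tendsto (fun n : ℕ => F (x - 1 / (n + 1))) atTop (𝓝 (F x)) := by
    have h1 : Tendsto (fun n : ℕ => x - 1 / (n + 1)) atTop (𝓝 x) := by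
      have : Tendsto (fun n : ℕ => 1 / ((n : ℝ) + 1)) atTop (𝓝 0) :=
        tendsto_one_div_add_atTop_nhds_zero_nat
      have h2 := tendsto_const_nhds (x := x) (f := atTop (α := ℕ)) |>.sub this
      simpa using h2
    exact (hF.continuousAt.tendsto.comp h1)
  have heq : ∀ᶠ n : ℕ in atTop, (μ (u n)).toReal = F (x - 1 / (n + 1)) := by
    filter_upwards [eventually_ge_atTop N] with n hn
    apply hcdf
    have h1 : (1 : ℝ) / (n + 1) ≤ 1 / (N + 1) := by
      apply one_div_le_one_div_of_le (by positivity)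
      exact_mod_cast Nat.add_le_add_right hn 1
    linarith
  have : (μ {ω | γ ω < x}).toReal = F x :=
    tendsto_nhds_unique (htr.congr' heq) hFt
  rw [← this, ENNReal.ofReal_toReal (measure_ne_top μ _)]

set_option maxHeartbeats 1000000 in
/-- THz secrecy outage, Case 1 of Proposition 2 (`0 < Ψ ≤ γ_E^max`). -/
theorem thz_sop_case1
    {Ω : Type*} [MeasurableSpace Ω] (μ : Measure Ω) [IsProbabilityMeasure μ]
    (γH γE : Ω → ℝ) (hmH : Measurable γH) (hmE : Measurable γE)
    (ξH ξE A0 γbarH γbarE Rs : ℝ)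
    (hξH : 0 < ξH) (hξE : 0 < ξE) (hA0 : 0 < A0) (hA0' : A0 ≤ 1)
    (hγbarH : 0 < γbarH) (hγbarE : 0 < γbarE) (hRs : 0 < Rs)
    (hindep : ProbabilityTheory.IndepFun γH γE μ)
    (hEdens : ∀ s : Set ℝ, MeasurableSet s →
      (μ (γE ⁻¹' s)).toReal
        = ∫ z in s ∩ Set.Ioc 0 (γbarE * A0 ^ 2),
            ξE ^ 2 / 2 * z ^ (ξE ^ 2 / 2 - 1) / (A0 ^ (ξE ^ 2) * γbarE ^ (ξE ^ 2 / 2)))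
    (hHcdf : ∀ x : ℝ, 0 ≤ x →
      (μ {ω | γH ω ≤ x}).toReal = min 1 ((x / γbarH) ^ (ξH ^ 2 / 2) * A0 ^ (-ξH ^ 2)))
    (hΨpos : 0 < (γbarH * A0 ^ 2 + 1) / 2 ^ Rs - 1)
    (hΨle : (γbarH * A0 ^ 2 + 1) / 2 ^ Rs - 1 ≤ γbarE * A0 ^ 2) :
    (μ {ω | γH ω < 2 ^ Rs * (1 + γE ω) - 1}).toReal
      = (2 ^ Rs - 1) ^ (ξH ^ 2 / 2) * ξE ^ 2 * γbarH ^ (-(ξH ^ 2) / 2)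
          / (2 * A0 ^ (ξH ^ 2 + ξE ^ 2) * γbarE ^ (ξE ^ 2 / 2))
        * (∫ z in Set.Ioo (0 : ℝ) ((γbarH * A0 ^ 2 + 1) / 2 ^ Rs - 1),
            z ^ (ξE ^ 2 / 2 - 1) * (1 + 2 ^ Rs / (2 ^ Rs - 1) * z) ^ (ξH ^ 2 / 2))
        + (γbarE * A0 ^ 2 / γbarE) ^ (ξE ^ 2 / 2) * A0 ^ (-ξE ^ 2)
        - (((γbarH * A0 ^ 2 + 1) / 2 ^ Rs - 1) / γbarE) ^ (ξE ^ 2 / 2)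
            * A0 ^ (-ξE ^ 2) := by
  -- abbreviations
  set Ψ : ℝ := (γbarH * A0 ^ 2 + 1) / 2 ^ Rs - 1 with hΨdef
  set M : ℝ := γbarE * A0 ^ 2 with hMdef
  have h2 : (1:ℝ) < 2 ^ Rs := by
    rw [Real.one_lt_rpow_iff_of_pos (by norm_num)]
    exact Or.inl ⟨by norm_num, hRs⟩
  have h2p : (0:ℝ) < 2 ^ Rs - 1 := by linarith
  set t : ℝ := 2 ^ Rs / (2 ^ Rs - 1) with htdef
  have ht : 0 < t := by positivity
  set eE : ℝ := ξE ^ 2 / 2 with heE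
  have heEpos : 0 < eE := by positivity
  set hh : ℝ := ξH ^ 2 / 2 with hhh
  have hhpos : 0 < hh := by positivity
  set g : ℝ → ℝ := fun z => 2 ^ Rs * (1 + z) - 1 with hg
  set FH : ℝ → ℝ := fun x => min 1 ((x / γbarH) ^ hh * A0 ^ (-ξH ^ 2)) with hFH
  set f : ℝ → ℝ := fun z => ξE ^ 2 / 2 * z ^ (eE - 1) / (A0 ^ (ξE ^ 2) * γbarE ^ eE) with hf
  set K0 : ℝ := (2 ^ Rs - 1) ^ hh * ξE ^ 2 * γbarH ^ (-(ξH ^ 2) / 2)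
      / (2 * A0 ^ (ξH ^ 2 + ξE ^ 2) * γbarE ^ eE) with hK0
  set J : ℝ → ℝ := fun z => z ^ (eE - 1) * (1 + t * z) ^ hh with hJ
  have hMpos : 0 < M := by positivity
  have hgmeas : Measurable g := by fun_prop
  have hgΨ : g Ψ = γbarH * A0 ^ 2 := by
    simp only [hg, hΨdef]
    field_simp
    ring
  have hgmono : ∀ ⦃a b : ℝ⦄, a ≤ b → g a ≤ g b := by
    intro a b hab
    simp only [hg]
    nlinarith
  have hFHcont : Continuous FH := by
    apply continuous_const.min
    apply Continuous.mul _ continuous_const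
    exact (continuous_id.div_const γbarH).rpow_const (fun x => Or.inr hhpos.le)
  have hone : ((A0 ^ 2 : ℝ)) ^ hh * A0 ^ (-ξH ^ 2) = 1 := by
    rw [← Real.rpow_natCast A0 2, ← Real.rpow_mul hA0.le, ← Real.rpow_add hA0]
    norm_num [hhh]
    rw [show (2*(ξH^2/2)+-ξH^2 : ℝ) = 0 by ring, Real.rpow_zero]
  -- the measures
  set νH : Measure ℝ := μ.map γH with hνH
  set νE : Measure ℝ := μ.map γE with hνE
  have hPH : IsProbabilityMeasure νH := Measure.isProbabilityMeasure_map hmH.aemeasurable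
  have hPE : IsProbabilityMeasure νE := Measure.isProbabilityMeasure_map hmE.aemeasurable
  have hIio : ∀ x : ℝ, 0 < x → νH (Set.Iio x) = ENNReal.ofReal (FH x) := by
    intro x hx
    have := cdf_lt_eq μ γH FH hFHcont (fun y hy => hHcdf y hy) hx
    rw [hνH, Measure.map_apply hmH measurableSet_Iio]
    convert this using 2
    rfl
  -- density of νE
  have hfint : IntegrableOn f (Set.Ioc 0 M) := by
    have h1 : IntervalIntegrable (fun z : ℝ => z ^ (eE - 1)) volume 0 M :=
      intervalIntegral.intervalIntegrable_rpow' (by linarith)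
    have h2 : IntegrableOn (fun z : ℝ => z ^ (eE - 1)) (Set.Ioc 0 M) :=
      (intervalIntegrable_iff_integrableOn_Ioc_of_le hMpos.le).mp h1
    have := (h2.const_mul (ξE ^ 2 / 2)).div_const (A0 ^ (ξE ^ 2) * γbarE ^ eE)
    exact this
  have hfnn : ∀ z ∈ Set.Ioc (0:ℝ) M, 0 ≤ f z := by
    intro z hz
    have : (0:ℝ) ≤ z ^ (eE - 1) := Real.rpow_nonneg hz.1.le _
    simp only [hf]
    positivity
  have hfm : Measurable f := by
    simp only [hf]; fun_prop
  have hdens : νE = volume.withDensity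
      (fun z => ENNReal.ofReal ((Set.Ioc 0 M).indicator f z)) := by
    apply Measure.ext
    intro s hs
    have hws : (volume.withDensity (fun z => ENNReal.ofReal ((Set.Ioc 0 M).indicator f z))) s
        = ∫⁻ z in s, ENNReal.ofReal ((Set.Ioc 0 M).indicator f z) := withDensity_apply _ hs
    have hind : (fun z => ENNReal.ofReal ((Set.Ioc 0 M).indicator f z))
        = (Set.Ioc 0 M).indicator (fun z => ENNReal.ofReal (f z)) := by
      ext z
      by_cases h : z ∈ Set.Ioc 0 M <;> simp [h]
    have h1 : (∫⁻ z in s, ENNReal.ofReal ((Set.Ioc 0 M).indicator f z))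
        = ∫⁻ z in Set.Ioc 0 M ∩ s, ENNReal.ofReal (f z) := by
      rw [hind, lintegral_indicator measurableSet_Ioc _,
        Measure.restrict_restrict measurableSet_Ioc]
    have h2 : (∫⁻ z in Set.Ioc 0 M ∩ s, ENNReal.ofReal (f z))
        = ENNReal.ofReal (∫ z in Set.Ioc 0 M ∩ s, f z) := by
      rw [← ofReal_integral_eq_lintegral_ofReal]
      · exact hfint.mono_set Set.inter_subset_left
      · apply (ae_restrict_iff' (measurableSet_Ioc.inter hs)).mpr
        exact ae_of_all _ fun z hz => hfnn z hz.1
    have h3 : μ (γE ⁻¹' s) = ENNReal.ofReal ((μ (γE ⁻¹' s)).toReal) :=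
      (ENNReal.ofReal_toReal (measure_ne_top μ _)).symm
    rw [hνE, Measure.map_apply hmE hs, h3, hEdens s hs, hws, h1, h2, Set.inter_comm]
  -- the event and decomposition
  set E : Set Ω := {ω | γH ω < 2 ^ Rs * (1 + γE ω) - 1} with hE
  have hEmeas : MeasurableSet E := by
    apply measurableSet_lt hmH
    fun_prop
  set A : Set Ω := γE ⁻¹' (Set.Ioc 0 Ψ) with hA
  set B : Set Ω := γE ⁻¹' (Set.Ioc Ψ M) with hB
  have hAm : MeasurableSet A := hmE measurableSet_Ioc
  have hBm : MeasurableSet B := hmE measurableSet_Ioc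
  have hnull : μ (γE ⁻¹' (Set.Ioc 0 M)ᶜ) = 0 := by
    have h1 := hEdens (Set.Ioc 0 M)ᶜ measurableSet_Ioc.compl
    simp only [Set.compl_inter_self, Measure.restrict_empty, integral_zero_measure] at h1
    exact ((ENNReal.toReal_eq_zero_iff _).mp h1).resolve_right (measure_ne_top μ _)
  have hsplit : μ E = μ (E ∩ A) + μ (E ∩ B) := by
    have hdisj : Disjoint A B := by
      apply Set.disjoint_left.mpr
      intro ω h1 h2
      simp only [hA, hB, Set.mem_preimage, Set.mem_Ioc] at h1 h2
      exact absurd h2.1 (not_lt.mpr h1.2)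
    have hAB : A ∪ B = γE ⁻¹' (Set.Ioc 0 M) := by
      rw [hA, hB, ← Set.preimage_union, Set.Ioc_union_Ioc_eq_Ioc hΨpos.le hΨle]
    have h1 : μ (E ∩ (A ∪ B)) = μ E := by
      apply measure_inter_conull
      rw [hAB, ← Set.preimage_compl]
      exact hnull
    rw [← h1, Set.inter_union_distrib_left]
    exact measure_union (hdisj.mono Set.inter_subset_right Set.inter_subset_right)
      (hEmeas.inter hBm)
  have hcapnull : μ {ω | γbarH * A0 ^ 2 < γH ω} = 0 := by
    have h1 := hHcdf (γbarH * A0 ^ 2) (by positivity)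
    have h2 : (γbarH * A0 ^ 2) / γbarH = A0 ^ 2 := by
      field_simp
    rw [h2, hone, min_self] at h1
    have h3 : μ {ω | γH ω ≤ γbarH * A0 ^ 2} = 1 := (ENNReal.toReal_eq_one_iff _).mp h1
    have hms : MeasurableSet {ω | γH ω ≤ γbarH * A0 ^ 2} := measurableSet_le hmH measurable_const
    have h4 := measure_compl hms (measure_ne_top μ _)
    rw [h3, measure_univ, tsub_self] at h4
    rw [show {ω | γbarH * A0 ^ 2 < γH ω} = {ω | γH ω ≤ γbarH * A0 ^ 2}ᶜ by
      ext ω; simp [not_le]]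
    exact h4
  have hBE : μ (E ∩ B) = μ B := by
    have hsub : B \ E ⊆ {ω | γbarH * A0 ^ 2 < γH ω} := by
      intro ω hω
      obtain ⟨h1, h2⟩ := hω
      simp only [hB, Set.mem_preimage, Set.mem_Ioc] at h1
      simp only [hE, Set.mem_setOf_eq, not_lt] at h2
      simp only [Set.mem_setOf_eq]
      rw [← hgΨ]
      have hlt : g Ψ < g (γE ω) := by
        simp only [hg]
        nlinarith [h1.1, h2p]
      calc g Ψ < g (γE ω) := hlt
        _ ≤ γH ω := by simpa [hg] using h2
    have h0 : μ (B \ E) = 0 := measure_mono_null hsub hcapnull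
    have h5 := measure_inter_add_diff (μ := μ) B hEmeas
    rw [h0, add_zero] at h5
    rw [Set.inter_comm]
    exact h5
  have hBval : (μ B).toReal
      = (M / γbarE) ^ eE * A0 ^ (-ξE ^ 2) - (Ψ / γbarE) ^ eE * A0 ^ (-ξE ^ 2) := by
    have h1 := hEdens (Set.Ioc Ψ M) measurableSet_Ioc
    rw [Set.inter_eq_left.mpr (Set.Ioc_subset_Ioc_left hΨpos.le)] at h1
    rw [hB, h1]
    rw [show (∫ z in Set.Ioc Ψ M, f z) = ∫ z in Ψ..M, f z from
      (intervalIntegral.integral_of_le hΨle).symm]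
    have hfe : ∀ z : ℝ, f z = (ξE ^ 2 / 2 / (A0 ^ (ξE ^ 2) * γbarE ^ eE)) * z ^ (eE - 1) := by
      intro z
      rw [hf]
      ring
    simp_rw [hfe]
    rw [intervalIntegral.integral_const_mul, integral_rpow (Or.inl (by linarith)),
      sub_add_cancel]
    rw [Real.div_rpow hMpos.le hγbarE.le, Real.div_rpow hΨpos.le hγbarE.le,
      Real.rpow_neg hA0.le]
    have hp1 : (0:ℝ) < A0 ^ (ξE ^ 2) := Real.rpow_pos_of_pos hA0 _
    have hp2 : (0:ℝ) < γbarE ^ eE := Real.rpow_pos_of_pos hγbarE _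
    rw [heE] at *
    field_simp
  have hBpart : (μ (E ∩ B)).toReal
      = (M / γbarE) ^ eE * A0 ^ (-ξE ^ 2) - (Ψ / γbarE) ^ eE * A0 ^ (-ξE ^ 2) := by
    rw [hBE]
    exact hBval
  have hgcont : Continuous g := by
    rw [hg]
    fun_prop
  have hApart : (μ (E ∩ A)).toReal = K0 * ∫ z in Set.Ioo (0:ℝ) Ψ, J z := by
    set S : Set (ℝ × ℝ) := {p : ℝ × ℝ | p.1 < g p.2} ∩ (Set.univ ×ˢ Set.Ioc 0 Ψ) with hS
    have hSm : MeasurableSet S := by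
      apply MeasurableSet.inter
      · exact measurableSet_lt measurable_fst (hgmeas.comp measurable_snd)
      · exact MeasurableSet.univ.prod measurableSet_Ioc
    have hpre : E ∩ A = (fun ω => (γH ω, γE ω)) ⁻¹' S := by
      ext ω
      simp only [hS, hE, hA, Set.mem_inter_iff, Set.mem_preimage, Set.mem_setOf_eq,
        Set.mem_prod, Set.mem_univ, Set.mem_Ioc, true_and, hg]
    have hmap : μ.map (fun ω => (γH ω, γE ω)) = νH.prod νE :=
      (ProbabilityTheory.indepFun_iff_map_prod_eq_prod_map_map
        hmH.aemeasurable hmE.aemeasurable).mp hindep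
    have h1 : μ (E ∩ A) = (νH.prod νE) S := by
      rw [hpre, ← Measure.map_apply (hmH.prodMk hmE) hSm, hmap]
    have h2 : (νH.prod νE) S = ∫⁻ y, νH ((fun x => (x, y)) ⁻¹' S) ∂νE :=
      Measure.prod_apply_symm hSm
    have hgpos : ∀ y ∈ Set.Ioc (0:ℝ) Ψ, 0 < g y := by
      intro y hy
      simp only [hg]
      nlinarith [hy.1, h2p]
    have hslice : ∀ y, νH ((fun x => (x, y)) ⁻¹' S)
        = (Set.Ioc 0 Ψ).indicator (fun y => ENNReal.ofReal (FH (g y))) y := by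
      intro y
      by_cases hy : y ∈ Set.Ioc (0:ℝ) Ψ
      · have hpree : ((fun x : ℝ => (x, y)) ⁻¹' S) = Set.Iio (g y) := by
          ext x
          simp [hS, hy]
        rw [hpree, hIio _ (hgpos y hy), Set.indicator_of_mem hy]
      · have hpree : ((fun x : ℝ => (x, y)) ⁻¹' S) = ∅ := by
          ext x
          simp [hS, hy]
        rw [hpree, measure_empty, Set.indicator_of_notMem hy]
    have h3 : (∫⁻ y, νH ((fun x => (x, y)) ⁻¹' S) ∂νE)
        = ∫⁻ y in Set.Ioc 0 Ψ, ENNReal.ofReal (FH (g y)) ∂νE := by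
      simp_rw [hslice]
      exact lintegral_indicator measurableSet_Ioc _
    set w : ℝ → ℝ≥0∞ := fun z => ENNReal.ofReal ((Set.Ioc 0 M).indicator f z) with hw
    have hwm : Measurable w := by
      apply ENNReal.measurable_ofReal.comp
      exact hfm.indicator measurableSet_Ioc
    have hGm : Measurable fun y => ENNReal.ofReal (FH (g y)) :=
      ENNReal.measurable_ofReal.comp ((hFHcont.comp hgcont).measurable)
    have h4 : (∫⁻ y in Set.Ioc 0 Ψ, ENNReal.ofReal (FH (g y)) ∂νE)
        = ∫⁻ y in Set.Ioc 0 Ψ, w y * ENNReal.ofReal (FH (g y)) ∂volume := by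
      rw [hdens, restrict_withDensity measurableSet_Ioc,
        lintegral_withDensity_eq_lintegral_mul _ hwm hGm]
      rfl
    have hpt : ∀ y ∈ Set.Ioc (0:ℝ) Ψ,
        w y * ENNReal.ofReal (FH (g y)) = ENNReal.ofReal (K0 * J y) := by
      intro y hy
      have hyM : y ∈ Set.Ioc (0:ℝ) M := ⟨hy.1, hy.2.trans hΨle⟩
      have hfy : w y = ENNReal.ofReal (f y) := by simp only [hw, Set.indicator_of_mem hyM]
      rw [hfy, ← ENNReal.ofReal_mul (hfnn y hyM)]
      congr 1
      have hgy : g y = (2 ^ Rs - 1) * (1 + t * y) := by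
        simp only [hg, htdef]
        field_simp
        ring
      have hbase : (0:ℝ) ≤ 1 + t * y := by nlinarith [hy.1, ht]
      have hle1 : (g y / γbarH) ^ hh * A0 ^ (-ξH ^ 2) ≤ 1 := by
        have h5 : g y ≤ γbarH * A0 ^ 2 := by rw [← hgΨ]; exact hgmono hy.2
        have h6 : g y / γbarH ≤ A0 ^ 2 := by
          rw [div_le_iff₀ hγbarH]
          linarith [h5]
        have h7 : (g y / γbarH) ^ hh ≤ (A0 ^ 2) ^ hh := by
          apply Real.rpow_le_rpow _ h6 hhpos.le
          have := hgpos y hy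
          positivity
        calc (g y / γbarH) ^ hh * A0 ^ (-ξH ^ 2)
            ≤ (A0 ^ 2) ^ hh * A0 ^ (-ξH ^ 2) :=
              mul_le_mul_of_nonneg_right h7 (Real.rpow_nonneg hA0.le _)
          _ = 1 := hone
      have hFHgy : FH (g y) = (g y / γbarH) ^ hh * A0 ^ (-ξH ^ 2) := min_eq_right hle1
      rw [hFHgy, hgy]
      rw [Real.div_rpow (by positivity) hγbarH.le, Real.mul_rpow h2p.le hbase]
      have hK1 : γbarH ^ (-ξH ^ 2 / 2) = (γbarH ^ hh)⁻¹ := by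
        rw [neg_div, hhh, Real.rpow_neg hγbarH.le]
      have hK2 : A0 ^ (-ξH ^ 2) = (A0 ^ (ξH ^ 2))⁻¹ := by rw [Real.rpow_neg hA0.le]
      have hK3 : A0 ^ (ξH ^ 2 + ξE ^ 2) = A0 ^ (ξH ^ 2) * A0 ^ (ξE ^ 2) :=
        Real.rpow_add hA0 _ _
      rw [hf, hJ, hK0, hK1, hK2, hK3]
      have hp1 : (0:ℝ) < A0 ^ (ξE ^ 2) := Real.rpow_pos_of_pos hA0 _
      have hp2 : (0:ℝ) < A0 ^ (ξH ^ 2) := Real.rpow_pos_of_pos hA0 _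
      have hp3 : (0:ℝ) < γbarE ^ eE := Real.rpow_pos_of_pos hγbarE _
      have hp4 : (0:ℝ) < γbarH ^ hh := Real.rpow_pos_of_pos hγbarH _
      field_simp
    have h5 : (∫⁻ y in Set.Ioc 0 Ψ, w y * ENNReal.ofReal (FH (g y)) ∂volume)
        = ∫⁻ y in Set.Ioc 0 Ψ, ENNReal.ofReal (K0 * J y) ∂volume := by
      apply setLIntegral_congr_fun measurableSet_Ioc
      exact hpt
    have hJm : Measurable J := by
      simp only [hJ]
      fun_prop
    have hJnn : ∀ y ∈ Set.Ioc (0:ℝ) Ψ, 0 ≤ J y := by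
      intro y hy
      have h6 : (0:ℝ) ≤ 1 + t * y := by nlinarith [hy.1, ht]
      simp only [hJ]
      exact mul_nonneg (Real.rpow_nonneg hy.1.le _) (Real.rpow_nonneg h6 _)
    have hJint : IntegrableOn J (Set.Ioc 0 Ψ) := by
      have hbnd : IntegrableOn (fun y : ℝ => (1 + t * Ψ) ^ hh * y ^ (eE - 1))
          (Set.Ioc 0 Ψ) := by
        have hi1 : IntervalIntegrable (fun z : ℝ => z ^ (eE - 1)) volume 0 Ψ :=
          intervalIntegral.intervalIntegrable_rpow' (by linarith)
        exact ((intervalIntegrable_iff_integrableOn_Ioc_of_le hΨpos.le).mp hi1).const_mul _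
      apply Integrable.mono' hbnd hJm.aestronglyMeasurable
      apply (ae_restrict_iff' measurableSet_Ioc).mpr
      apply ae_of_all
      intro y hy
      rw [Real.norm_eq_abs, abs_of_nonneg (hJnn y hy)]
      simp only [hJ]
      have hb1 : (0:ℝ) ≤ 1 + t * y := by nlinarith [hy.1, ht]
      have hb2 : (1 + t * y) ^ hh ≤ (1 + t * Ψ) ^ hh := by
        apply Real.rpow_le_rpow hb1 _ hhpos.le
        nlinarith [hy.2, ht.le]
      calc y ^ (eE - 1) * (1 + t * y) ^ hh ≤ y ^ (eE - 1) * (1 + t * Ψ) ^ hh :=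
            mul_le_mul_of_nonneg_left hb2 (Real.rpow_nonneg hy.1.le _)
        _ = (1 + t * Ψ) ^ hh * y ^ (eE - 1) := by ring
    have hK0nn : 0 ≤ K0 := by
      rw [hK0]
      have hr1 : (0:ℝ) ≤ (2 ^ Rs - 1) ^ hh := Real.rpow_nonneg h2p.le _
      have hr2 : (0:ℝ) ≤ γbarH ^ (-ξH ^ 2 / 2) := Real.rpow_nonneg hγbarH.le _
      have hr3 : (0:ℝ) < A0 ^ (ξH ^ 2 + ξE ^ 2) := Real.rpow_pos_of_pos hA0 _
      have hr4 : (0:ℝ) < γbarE ^ eE := Real.rpow_pos_of_pos hγbarE _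
      positivity
    have h6 : (∫⁻ y in Set.Ioc 0 Ψ, ENNReal.ofReal (K0 * J y) ∂volume)
        = ENNReal.ofReal (∫ y in Set.Ioc 0 Ψ, K0 * J y) := by
      rw [← ofReal_integral_eq_lintegral_ofReal (hJint.const_mul K0)]
      apply (ae_restrict_iff' measurableSet_Ioc).mpr
      exact ae_of_all _ fun y hy => mul_nonneg hK0nn (hJnn y hy)
    have h7 : (∫ y in Set.Ioc 0 Ψ, K0 * J y) = K0 * ∫ y in Set.Ioo (0:ℝ) Ψ, J y := by
      rw [integral_const_mul, integral_Ioc_eq_integral_Ioo]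
    have hJIoo : 0 ≤ ∫ y in Set.Ioo (0:ℝ) Ψ, J y := by
      apply setIntegral_nonneg measurableSet_Ioo
      intro y hy
      exact hJnn y ⟨hy.1, hy.2.le⟩
    rw [h1, h2, h3, h4, h5, h6, h7, ENNReal.toReal_ofReal (mul_nonneg hK0nn hJIoo)]
  rw [hsplit, ENNReal.toReal_add (measure_ne_top μ _) (measure_ne_top μ _), hApart, hBpart]
  ring
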